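/- In the deterministic postiteration posterior of Reid et al., the Z-statistic is degenerate: with x - x_m = V̄_m ψ̄_m, Σ_m = V̄_m Ψ̄_m V̄_mᵀ, and Ψ̄_m = diag(ψ_{m+1}², …, ψ_d²) with all ψ_i ≠ 0, one has Z(x) = (x_m - x)ᵀ Σ_m† (x_m - x) = d - m, independent of x. -/

import Mathlib

open Matrix
open scoped Matrix

/-- In the deterministic postiteration posterior, with
`x - x_m = V̄ ψ̄`, `Σ_m = V̄ diag(ψᵢ²) V̄ᵀ` (all `ψᵢ ≠ 0`), and
`Σ_m† = (L†)ᵀ L†` with `L† = diag(|ψᵢ|⁻¹) (V̄ᵀ V̄)⁻¹ V̄ᵀ`, the Z-statistic is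
degenerate: `Z(x) = (x_m - x)ᵀ Σ_m† (x_m - x) = d - m`, independent of `x`. -/
theorem deterministic_postiteration_z_statistic_degenerate
    (d m : ℕ) (hm : m ≤ d)
    (Vb : Matrix (Fin d) (Fin (d - m)) ℝ)
    (hVb : LinearIndependent ℝ (fun j : Fin (d - m) => Vbᵀ j))
    (ψ : Fin (d - m) → ℝ) (hψ : ∀ i, ψ i ≠ 0)
    (x xm : Fin d → ℝ)
    (herr : x - xm = Vb.mulVec ψ) :
    (xm - x) ⬝ᵥ
      ((Matrix.diagonal (fun i => |ψ i|⁻¹) * (Vbᵀ * Vb)⁻¹ * Vbᵀ)ᵀ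
        * (Matrix.diagonal (fun i => |ψ i|⁻¹) * (Vbᵀ * Vb)⁻¹ * Vbᵀ)).mulVec (xm - x)
    = ((d - m : ℕ) : ℝ) := by
  set L : Matrix (Fin (d - m)) (Fin d) ℝ :=
    Matrix.diagonal (fun i => |ψ i|⁻¹) * (Vbᵀ * Vb)⁻¹ * Vbᵀ with hL
  -- Vb.mulVec is injective
  have hinj : Function.Injective Vb.mulVec := Matrix.mulVec_injective_iff.mpr hVb
  -- Gram matrix is invertible
  have hGinj : Function.Injective (Vbᵀ * Vb).mulVec := by
    intro a b hab
    apply hinj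
    have h0 : (Vbᵀ * Vb).mulVec (a - b) = 0 := by
      rw [Matrix.mulVec_sub, hab, sub_self]
    have h1 : (Vb.mulVec (a - b)) ⬝ᵥ (Vb.mulVec (a - b)) = 0 := by
      have h1' : (a - b) ⬝ᵥ ((Vbᵀ * Vb).mulVec (a - b)) = 0 := by
        rw [h0, dotProduct_zero]
      rwa [← Matrix.mulVec_mulVec, Matrix.dotProduct_mulVec, Matrix.vecMul_transpose] at h1'
    have h2 : Vb.mulVec (a - b) = 0 := by
      rwa [dotProduct_self_eq_zero] at h1
    rw [Matrix.mulVec_sub, sub_eq_zero] at h2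
    exact h2
  have hG : IsUnit ((Vbᵀ * Vb).det) :=
    (Matrix.isUnit_iff_isUnit_det _).mp (Matrix.mulVec_injective_iff_isUnit.mp hGinj)
  -- xm - x = -(Vb ψ)
  have hx : xm - x = -(Vb.mulVec ψ) := by
    rw [← herr]; abel
  -- L (xm - x) = -(diag |ψ|⁻¹) ψ
  have hLx : L.mulVec (xm - x) = -(Matrix.diagonal (fun i => |ψ i|⁻¹)).mulVec ψ := by
    rw [hx, Matrix.mulVec_neg, Matrix.mulVec_mulVec, hL]
    congr 1
    rw [Matrix.mul_assoc, Matrix.mul_assoc, Matrix.nonsing_inv_mul _ hG, Matrix.mul_one]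
  rw [← Matrix.mulVec_mulVec, Matrix.dotProduct_mulVec, Matrix.vecMul_transpose, hLx,
    neg_dotProduct, dotProduct_neg, neg_neg]
  have : ∀ i, (Matrix.diagonal (fun i => |ψ i|⁻¹)).mulVec ψ i = |ψ i|⁻¹ * ψ i := by
    intro i; rw [Matrix.mulVec_diagonal]
  rw [dotProduct]
  simp only [this]
  have hone : ∀ i : Fin (d - m), (|ψ i|⁻¹ * ψ i) * (|ψ i|⁻¹ * ψ i) = 1 := by
    intro i
    have habs : |ψ i| ≠ 0 := abs_ne_zero.mpr (hψ i)
    field_simp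
    exact (sq_abs _).symm
  rw [Finset.sum_congr rfl (fun i _ => hone i)]
  simp
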